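/- Let K be a compact Hausdorff space, ρ: [0,1] → K a continuous surjection, and μ a Borel probability measure on K. Define g: K → [0,1] by g(x) = min(ρ⁻¹({x})). Then g is lower semicontinuous (hence Borel measurable), ρ ∘ g = id_K, and the push-forward measure g_*μ is the unique Borel probability measure σ on [0,1] satisfying σ([0,t]) = μ(ρ([0,t])) for all t ∈ [0,1]. -/
import Mathlib


open MeasureTheory

/-- Let `ρ : [0,1] → K` be a continuous surjection onto a compact Hausdorff
space and `μ` a Borel probability measure on `K`.  The function `g(x) = min ρ⁻¹({x})` is
lower semicontinuous (hence Borel measurable), satisfies `ρ ∘ g = id`, and the push-forward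
`g_*μ` is the unique Borel probability measure `σ` on `[0,1]` with
`σ([0,t]) = μ(ρ([0,t]))` for all `t`. -/
theorem stmt_13 {K : Type*} [TopologicalSpace K] [CompactSpace K] [T2Space K]
    [MeasurableSpace K] [BorelSpace K]
    (μ : Measure K) [IsProbabilityMeasure μ]
    (ρ : Set.Icc (0:ℝ) 1 → K) (hρc : Continuous ρ) (hρs : Function.Surjective ρ)
    (g : K → Set.Icc (0:ℝ) 1) (hg : ∀ x : K, IsLeast {t | ρ t = x} (g x)) :
    LowerSemicontinuous g ∧ Measurable g ∧ ρ ∘ g = id ∧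
    (∀ t : Set.Icc (0:ℝ) 1, (Measure.map g μ) (Set.Iic t) = μ (ρ '' Set.Iic t)) ∧
    (∀ σ : Measure (Set.Icc (0:ℝ) 1), IsProbabilityMeasure σ →
      (∀ t : Set.Icc (0:ℝ) 1, σ (Set.Iic t) = μ (ρ '' Set.Iic t)) →
      σ = Measure.map g μ) := by
  have hpre : ∀ t : Set.Icc (0:ℝ) 1, g ⁻¹' Set.Iic t = ρ '' Set.Iic t := by
    intro t
    ext x
    constructor
    · intro hx
      exact ⟨g x, hx, (hg x).1⟩
    · rintro ⟨s, hs, rfl⟩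
      exact le_trans ((hg (ρ s)).2 rfl) hs
  have hlsc : LowerSemicontinuous g := by
    rw [lowerSemicontinuous_iff_isOpen_preimage]
    intro y
    have : g ⁻¹' Set.Ioi y = (ρ '' Set.Iic y)ᶜ := by
      rw [← hpre y]
      ext x
      simp [not_le]
    rw [this]
    exact ((isClosed_Iic.isCompact.image hρc).isClosed).isOpen_compl
  have hmeas : Measurable g := hlsc.measurable
  refine ⟨hlsc, hmeas, ?_, ?_, ?_⟩
  · funext x; exact (hg x).1
  · intro t
    rw [Measure.map_apply hmeas measurableSet_Iic, hpre t]
  · intro σ hσ hσt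
    haveI : IsProbabilityMeasure (Measure.map g μ) :=
      Measure.isProbabilityMeasure_map hmeas.aemeasurable
    refine Measure.ext_of_Iic σ (Measure.map g μ) (fun t => ?_)
    rw [hσt t, Measure.map_apply hmeas measurableSet_Iic, hpre t]
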